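/- Let M be a positive integer and h > 0. Let w, u be grid functions on {0,…,M} with w₀ = w_M = u₀ = u_M = 0, and let R be any grid function on {0,…,M}, such that wᵢ = δₓ²uᵢ − (h²/12)·δₓ²wᵢ + Rᵢ for 1 ≤ i ≤ M−1. Then the exact identity ⟨w,u⟩ = −|u|₁² − (h²/12)·‖w‖² + (h⁴/144)·|w|₁² + (h²/12)·⟨R,w⟩ + ⟨R,u⟩ holds. -/

import Mathlib

/-- The second difference quotient `δₓ²vᵢ = (v_{i+1} - 2vᵢ + v_{i-1})/h²`. -/
noncomputable def dx2 (h : ℝ) (v : ℕ → ℝ) (i : ℕ) : ℝ :=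
  (v (i + 1) - 2 * v i + v (i - 1)) / h ^ 2

/-- The discrete inner product `⟨u,v⟩ = h ∑_{i=1}^{M-1} uᵢ vᵢ`. -/
noncomputable def inn (M : ℕ) (h : ℝ) (u v : ℕ → ℝ) : ℝ :=
  h * ∑ i ∈ Finset.Icc 1 (M - 1), u i * v i

/-- The squared discrete `H¹`-seminorm `|v|₁² = h ∑_{i=1}^{M} ((vᵢ - v_{i-1})/h)²`. -/
noncomputable def sem1sq (M : ℕ) (h : ℝ) (v : ℕ → ℝ) : ℝ :=
  h * ∑ i ∈ Finset.Icc 1 M, ((v i - v (i - 1)) / h) ^ 2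

/-- The squared discrete `L²`-norm `‖v‖² = h ∑_{i=1}^{M-1} vᵢ²`. -/
noncomputable def normsq (M : ℕ) (h : ℝ) (v : ℕ → ℝ) : ℝ :=
  h * ∑ i ∈ Finset.Icc 1 (M - 1), (v i) ^ 2

lemma shift_sum (n : ℕ) (g : ℕ → ℝ) :
    ∑ i ∈ Finset.Icc 1 n, g (i+1) = ∑ i ∈ Finset.Icc 2 (n+1), g i := by
  rw [← Finset.Ico_add_one_right_eq_Icc, ← Finset.Ico_add_one_right_eq_Icc, Finset.sum_Ico_eq_sum_range,
    Finset.sum_Ico_eq_sum_range]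
  apply Finset.sum_congr (by congr 1 <;> omega)
  intro i _; congr 1; omega

lemma key (M : ℕ) (hM : 1 ≤ M) (v z : ℕ → ℝ) (hz0 : z 0 = 0) (hzM : z M = 0) :
    ∑ i ∈ Finset.Icc 1 (M-1), (v (i+1) - 2*v i + v (i-1)) * z i
    = -∑ i ∈ Finset.Icc 1 M, (v i - v (i-1)) * (z i - z (i-1)) := by
  have hsplit1 : Finset.Icc 1 M = insert M (Finset.Icc 1 (M-1)) := by
    ext x; simp only [Finset.mem_Icc, Finset.mem_insert]; omega
  have hMnot : M ∉ Finset.Icc 1 (M-1) := by simp only [Finset.mem_Icc]; omega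
  have hsplit2 : Finset.Icc 1 M = insert 1 (Finset.Icc 2 M) := by
    ext x; simp only [Finset.mem_Icc, Finset.mem_insert]; omega
  have h1not : (1:ℕ) ∉ Finset.Icc 2 M := by simp
  have shift : ∑ i ∈ Finset.Icc 1 (M-1), (v (i+1) - v i) * z i
      = ∑ i ∈ Finset.Icc 2 M, (v i - v (i-1)) * z (i-1) := by
    have := shift_sum (M-1) (fun i => (v i - v (i-1)) * z (i-1))
    rw [Nat.sub_add_cancel hM] at this
    simpa using this
  have e1 : ∑ i ∈ Finset.Icc 2 M, (v i - v (i-1)) * z (i-1)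
      = ∑ i ∈ Finset.Icc 1 M, (v i - v (i-1)) * z (i-1) := by
    rw [hsplit2, Finset.sum_insert h1not]
    simp [hz0]
  have e2 : ∑ i ∈ Finset.Icc 1 (M-1), (v i - v (i-1)) * z i
      = ∑ i ∈ Finset.Icc 1 M, (v i - v (i-1)) * z i := by
    rw [hsplit1, Finset.sum_insert hMnot]
    simp [hzM]
  have expand : ∀ i : ℕ, (v (i+1) - 2*v i + v (i-1)) * z i
      = (v (i+1) - v i) * z i - (v i - v (i-1)) * z i := by intro i; ring
  calc ∑ i ∈ Finset.Icc 1 (M-1), (v (i+1) - 2*v i + v (i-1)) * z i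
      = ∑ i ∈ Finset.Icc 1 (M-1), ((v (i+1) - v i) * z i - (v i - v (i-1)) * z i) := by
        exact Finset.sum_congr rfl fun i _ => expand i
    _ = ∑ i ∈ Finset.Icc 1 (M-1), (v (i+1) - v i) * z i
        - ∑ i ∈ Finset.Icc 1 (M-1), (v i - v (i-1)) * z i := Finset.sum_sub_distrib _ _
    _ = ∑ i ∈ Finset.Icc 1 M, (v i - v (i-1)) * z (i-1)
        - ∑ i ∈ Finset.Icc 1 M, (v i - v (i-1)) * z i := by rw [shift, e1, e2]
    _ = -∑ i ∈ Finset.Icc 1 M, (v i - v (i-1)) * (z i - z (i-1)) := by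
        rw [← Finset.sum_neg_distrib, ← Finset.sum_sub_distrib]
        exact Finset.sum_congr rfl fun i _ => by ring

lemma inn_dx2 (M : ℕ) (hM : 1 ≤ M) (h : ℝ) (hh : h ≠ 0) (v z : ℕ → ℝ)
    (hz0 : z 0 = 0) (hzM : z M = 0) :
    inn M h (dx2 h v) z
    = -(1/h) * ∑ i ∈ Finset.Icc 1 M, (v i - v (i-1)) * (z i - z (i-1)) := by
  unfold inn dx2
  have e : ∑ i ∈ Finset.Icc 1 (M-1), (v (i+1) - 2*v i + v (i-1)) / h^2 * z i
      = (1/h^2) * ∑ i ∈ Finset.Icc 1 (M-1), (v (i+1) - 2*v i + v (i-1)) * z i := by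
    rw [Finset.mul_sum]
    exact Finset.sum_congr rfl fun i _ => by ring
  rw [e, key M hM v z hz0 hzM]
  field_simp

lemma sem_eq (M : ℕ) (h : ℝ) (hh : h ≠ 0) (v : ℕ → ℝ) :
    sem1sq M h v = (1/h) * ∑ i ∈ Finset.Icc 1 M, (v i - v (i-1)) * (v i - v (i-1)) := by
  unfold sem1sq
  rw [Finset.mul_sum, Finset.mul_sum]
  exact Finset.sum_congr rfl fun i _ => by field_simp

lemma norm_eq_inn (M : ℕ) (h : ℝ) (v : ℕ → ℝ) : normsq M h v = inn M h v v := by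
  unfold normsq inn
  congr 1
  exact Finset.sum_congr rfl fun i _ => by ring

/-- If `wᵢ = δₓ²uᵢ - (h²/12)δₓ²wᵢ + Rᵢ` for `1 ≤ i ≤ M-1` and `u, w` vanish at the
endpoints, then
`⟨w,u⟩ = -|u|₁² - (h²/12)‖w‖² + (h⁴/144)|w|₁² + (h²/12)⟨R,w⟩ + ⟨R,u⟩`. -/
theorem stmt_7 (M : ℕ) (hM : 0 < M) (h : ℝ) (hh : 0 < h)
    (w u R : ℕ → ℝ) (hw0 : w 0 = 0) (hwM : w M = 0) (hu0 : u 0 = 0) (huM : u M = 0)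
    (hrel : ∀ i, 1 ≤ i → i ≤ M - 1 → w i = dx2 h u i - h ^ 2 / 12 * dx2 h w i + R i) :
    inn M h w u = -sem1sq M h u - h ^ 2 / 12 * normsq M h w + h ^ 4 / 144 * sem1sq M h w
      + h ^ 2 / 12 * inn M h R w + inn M h R u := by
  have hh' : h ≠ 0 := ne_of_gt hh
  have hM1 : 1 ≤ M := hM
  have subst : ∀ z : ℕ → ℝ, inn M h w z
      = inn M h (dx2 h u) z - h^2/12 * inn M h (dx2 h w) z + inn M h R z := by
    intro z
    unfold inn
    have hc : ∀ i ∈ Finset.Icc 1 (M-1), w i * z i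
        = dx2 h u i * z i - h^2/12 * (dx2 h w i * z i) + R i * z i := by
      intro i hi
      rw [Finset.mem_Icc] at hi
      rw [hrel i hi.1 hi.2]; ring
    rw [Finset.sum_congr rfl hc, Finset.sum_add_distrib, Finset.sum_sub_distrib,
      ← Finset.mul_sum]
    ring
  have E1 := subst u
  have E2 := subst w
  rw [inn_dx2 M hM1 h hh' u u hu0 huM, inn_dx2 M hM1 h hh' w u hu0 huM] at E1
  rw [inn_dx2 M hM1 h hh' u w hw0 hwM, inn_dx2 M hM1 h hh' w w hw0 hwM] at E2
  have sym : ∑ i ∈ Finset.Icc 1 M, (u i - u (i-1)) * (w i - w (i-1))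
      = ∑ i ∈ Finset.Icc 1 M, (w i - w (i-1)) * (u i - u (i-1)) :=
    Finset.sum_congr rfl fun i _ => by ring
  rw [sym] at E2
  rw [sem_eq M h hh' u, sem_eq M h hh' w, norm_eq_inn M h w]
  linear_combination E1 + (h^2/12) * E2
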